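/- Work in ℝᵐ with the Euclidean inner product and norm. Let Ψ, ψ : ℝᵐ → ℝ be convex and differentiable with ∇Ψ Lipschitz of constant L_F and ∇ψ Lipschitz of constant L_f. Let Y ⊆ ℝᵐ be nonempty, closed and convex, and let α, β ∈ (0,1], s_u ∈ (0, 1/L_F), s_l ∈ (0, 1/L_f), μ ∈ (0,1). Given w ∈ ℝᵐ, define z^u = w − s_u α ∇Ψ(w), z^l = w − s_l β ∇ψ(w), and w⁺ = Proj_Y( (1−μ) z^l + μ z^u ). Then for every y ∈ Y: (1−μ)β ψ(y) + (μ s_u α / s_l) Ψ(y) ≥ (1−μ)β ψ(z^l) + (μ s_u α / s_l) Ψ(z^u) + (μ/(2 s_l))(1 − α s_u L_F) ‖w − z^u‖² + (1/(2 s_l)) ‖y − w⁺‖² + (1/(2 s_l)) ‖((1−μ) z^l + μ z^u) − w⁺‖² + ((1−μ)/(2 s_l))(1 − β s_l L_f) ‖w − z^l‖² − (1/(2 s_l)) ‖y − w‖². -/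

import Mathlib

open Set InnerProductSpace

set_option maxHeartbeats 1000000

section Aux

open InnerProductSpace

variable {E : Type*} [NormedAddCommGroup E] [InnerProductSpace ℝ E] [CompleteSpace E]

omit [CompleteSpace E] in
lemma line_hasDerivAt (x d : E) (t : ℝ) :
    HasDerivAt (fun t : ℝ => x + t • d) d t := by
  simpa using ((hasDerivAt_id t).smul_const d).const_add x

lemma conv_grad_ineq (g : E → ℝ) (hg : ConvexOn ℝ univ g) {x gx : E}
    (hx : HasGradientAt g gx x) (y : E) :
    g x + ⟪gx, y - x⟫_ℝ ≤ g y := by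
  set φ : ℝ → ℝ := fun t => g (x + t • (y - x)) with hφ
  have hφconv : ConvexOn ℝ univ φ := by
    have := hg.comp_affineMap (AffineMap.lineMap (k := ℝ) x y)
    simp only [preimage_univ] at this
    have heq : φ = g ∘ (AffineMap.lineMap (k := ℝ) x y) := by
      funext t
      simp only [φ, Function.comp, AffineMap.lineMap_apply, vsub_eq_sub, vadd_eq_add]
      rw [add_comm]
    rw [heq]; exact this
  have hφ0 : HasDerivAt φ ⟪gx, y - x⟫_ℝ 0 := by
    have h0 : x + (0:ℝ) • (y - x) = x := by simp
    have hx' : HasFDerivAt g (toDual ℝ E gx) (x + (0:ℝ) • (y - x)) := by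
      rw [h0]; exact hx.hasFDerivAt
    have hc := hx'.comp_hasDerivAt (0:ℝ) (line_hasDerivAt x (y - x) 0)
    simpa [Function.comp_def, toDual_apply_apply] using hc
  have := hφconv.le_slope_of_hasDerivAt (mem_univ (0:ℝ)) (mem_univ 1) one_pos hφ0
  rw [slope_def_field] at this
  simp [φ] at this
  linarith

lemma descent_ineq (g : E → ℝ) (g' : E → E) (hg : ∀ x, HasGradientAt g (g' x) x)
    {L : ℝ} (hlip : ∀ a b, ‖g' a - g' b‖ ≤ L * ‖a - b‖) (w z : E) :
    g z ≤ g w + ⟪g' w, z - w⟫_ℝ + L / 2 * ‖z - w‖ ^ 2 := by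
  set d := z - w with hd
  set h : ℝ → ℝ := fun t => g (w + t • d) - t * ⟪g' w, d⟫_ℝ - L * t ^ 2 / 2 * ‖d‖ ^ 2
    with hh
  have hder : ∀ t : ℝ, HasDerivAt h
      (⟪g' (w + t • d), d⟫_ℝ - ⟪g' w, d⟫_ℝ - L * t * ‖d‖ ^ 2) t := by
    intro t
    have hxfd : HasFDerivAt g (InnerProductSpace.toDual ℝ E (g' (w + t • d))) (w + t • d) :=
      (hg _).hasFDerivAt
    have h1 : HasDerivAt (fun t : ℝ => g (w + t • d)) ⟪g' (w + t • d), d⟫_ℝ t := by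
      have hc := hxfd.comp_hasDerivAt t (line_hasDerivAt w d t)
      simpa [Function.comp_def, InnerProductSpace.toDual_apply_apply] using hc
    have h2 : HasDerivAt (fun t : ℝ => t * ⟪g' w, d⟫_ℝ) ⟪g' w, d⟫_ℝ t := by
      simpa using (hasDerivAt_id t).mul_const ⟪g' w, d⟫_ℝ
    have h3 : HasDerivAt (fun t : ℝ => L * t ^ 2 / 2 * ‖d‖ ^ 2) (L * t * ‖d‖ ^ 2) t := by
      have := (((hasDerivAt_pow 2 t).const_mul L).div_const 2).mul_const (‖d‖ ^ 2)
      convert this using 1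
      · rfl
      · rfl
      ring
    exact (h1.sub h2).sub h3
  have anti : AntitoneOn h (Ici (0:ℝ)) := by
    apply antitoneOn_of_deriv_nonpos (convex_Ici 0)
    · exact fun t _ => ((hder t).differentiableAt).continuousAt.continuousWithinAt
    · exact fun t _ => ((hder t).differentiableAt).differentiableWithinAt
    · intro t ht
      rw [interior_Ici] at ht
      rw [(hder t).deriv]
      have h1 : ⟪g' (w + t • d) - g' w, d⟫_ℝ ≤ ‖g' (w + t • d) - g' w‖ * ‖d‖ :=
        real_inner_le_norm _ _
      have h2 : ‖g' (w + t • d) - g' w‖ ≤ L * (t * ‖d‖) := by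
        have := hlip (w + t • d) w
        simpa [norm_smul, abs_of_pos (show (0:ℝ) < t from ht), mul_assoc] using this
      have h3 : ⟪g' (w + t • d), d⟫_ℝ - ⟪g' w, d⟫_ℝ = ⟪g' (w + t • d) - g' w, d⟫_ℝ := by
        rw [inner_sub_left]
      have hdn : (0:ℝ) ≤ ‖d‖ := norm_nonneg _
      nlinarith [mul_le_mul_of_nonneg_right h2 hdn]
  have h10 : h 1 ≤ h 0 := anti (self_mem_Ici) (by norm_num) zero_le_one
  have e1 : w + (1:ℝ) • d = z := by rw [hd]; simp
  have e0 : w + (0:ℝ) • d = w := by simp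
  simp only [hh, e1, e0, one_mul, one_pow, zero_mul, zero_pow, mul_zero, sub_zero] at h10
  nlinarith [h10]

lemma proj_obtuse {Y : Set E} (hY : Convex ℝ Y) {p q : E} (hq : q ∈ Y)
    (hmin : ∀ v ∈ Y, ‖p - q‖ ≤ ‖p - v‖) : ∀ y ∈ Y, ⟪p - q, y - q⟫_ℝ ≤ 0 := by
  letI : Nonempty Y := ⟨⟨q, hq⟩⟩
  have heq : ‖p - q‖ = ⨅ w : Y, ‖p - w‖ :=
    le_antisymm (le_ciInf fun v => hmin v v.2)
      (ciInf_le (f := fun w : Y => ‖p - (w : E)‖) ⟨0, by rintro _ ⟨v, rfl⟩; exact norm_nonneg _⟩ ⟨q, hq⟩)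
  exact fun y hy => (norm_eq_iInf_iff_real_inner_le_zero hY hq).mp heq y hy

end Aux

theorem stmt2 {m : ℕ}
    (Ψ ψ : EuclideanSpace ℝ (Fin m) → ℝ)
    (Ψ' ψ' : EuclideanSpace ℝ (Fin m) → EuclideanSpace ℝ (Fin m))
    (hΨconv : ConvexOn ℝ univ Ψ) (hψconv : ConvexOn ℝ univ ψ)
    (hΨgrad : ∀ w, HasGradientAt Ψ (Ψ' w) w) (hψgrad : ∀ w, HasGradientAt ψ (ψ' w) w)
    (LF Lf : ℝ)
    (hΨlip : ∀ a b, ‖Ψ' a - Ψ' b‖ ≤ LF * ‖a - b‖)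
    (hψlip : ∀ a b, ‖ψ' a - ψ' b‖ ≤ Lf * ‖a - b‖)
    (Y : Set (EuclideanSpace ℝ (Fin m)))
    (hYne : Y.Nonempty) (hYcl : IsClosed Y) (hYconv : Convex ℝ Y)
    (α β su sl μ : ℝ)
    (hα : α ∈ Ioc (0 : ℝ) 1) (hβ : β ∈ Ioc (0 : ℝ) 1)
    (hsu : su ∈ Ioo 0 (1 / LF)) (hsl : sl ∈ Ioo 0 (1 / Lf)) (hμ : μ ∈ Ioo (0 : ℝ) 1)
    (w zu zl wplus : EuclideanSpace ℝ (Fin m))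
    (hzu : zu = w - (su * α) • Ψ' w) (hzl : zl = w - (sl * β) • ψ' w)
    (hwplusY : wplus ∈ Y)
    (hwplus : ∀ v ∈ Y, ‖((1 - μ) • zl + μ • zu) - wplus‖ ≤ ‖((1 - μ) • zl + μ • zu) - v‖) :
    ∀ y ∈ Y,
      (1 - μ) * β * ψ y + (μ * su * α / sl) * Ψ y ≥
        (1 - μ) * β * ψ zl + (μ * su * α / sl) * Ψ zu
        + (μ / (2 * sl)) * (1 - α * su * LF) * ‖w - zu‖ ^ 2
        + (1 / (2 * sl)) * ‖y - wplus‖ ^ 2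
        + (1 / (2 * sl)) * ‖((1 - μ) • zl + μ • zu) - wplus‖ ^ 2
        + ((1 - μ) / (2 * sl)) * (1 - β * sl * Lf) * ‖w - zl‖ ^ 2
        - (1 / (2 * sl)) * ‖y - w‖ ^ 2 := by
  intro y hy
  obtain ⟨hsl0, hsl1⟩ := hsl
  obtain ⟨hsu0, hsu1⟩ := hsu
  obtain ⟨hα0, hα1⟩ := hα
  obtain ⟨hβ0, hβ1⟩ := hβ
  obtain ⟨hμ0, hμ1⟩ := hμ
  set p : EuclideanSpace ℝ (Fin m) := (1 - μ) • zl + μ • zu with hp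
  -- ψ part
  have ewl : w - zl = (sl * β) • ψ' w := by rw [hzl]; exact sub_sub_cancel _ _
  have ewu : w - zu = (su * α) • Ψ' w := by rw [hzu]; exact sub_sub_cancel _ _
  have base1 : ⟪ψ' w, y - zl⟫_ℝ - Lf / 2 * ‖w - zl‖ ^ 2 ≤ ψ y - ψ zl := by
    have c1 := conv_grad_ineq ψ hψconv (hψgrad w) y
    have d1 := descent_ineq ψ ψ' hψgrad hψlip w zl
    rw [norm_sub_rev] at d1
    have h' : ⟪ψ' w, zl - w⟫_ℝ + ⟪ψ' w, y - zl⟫_ℝ = ⟪ψ' w, y - w⟫_ℝ := by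
      rw [← inner_add_right]; congr 1; abel
    linarith
  have base2 : ⟪Ψ' w, y - zu⟫_ℝ - LF / 2 * ‖w - zu‖ ^ 2 ≤ Ψ y - Ψ zu := by
    have c2 := conv_grad_ineq Ψ hΨconv (hΨgrad w) y
    have d2 := descent_ineq Ψ Ψ' hΨgrad hΨlip w zu
    rw [norm_sub_rev] at d2
    have h' : ⟪Ψ' w, zu - w⟫_ℝ + ⟪Ψ' w, y - zu⟫_ℝ = ⟪Ψ' w, y - w⟫_ℝ := by
      rw [← inner_add_right]; congr 1; abel
    linarith
  have hi1 : ⟪w - zl, y - zl⟫_ℝ = sl * β * ⟪ψ' w, y - zl⟫_ℝ := by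
    rw [ewl, real_inner_smul_left]
  have hi2 : ⟪w - zu, y - zu⟫_ℝ = su * α * ⟪Ψ' w, y - zu⟫_ℝ := by
    rw [ewu, real_inner_smul_left]
  have F1 : ⟪w - zl, y - zl⟫_ℝ - sl * β * (Lf / 2) * ‖w - zl‖ ^ 2
      ≤ sl * β * (ψ y - ψ zl) := by
    have := mul_le_mul_of_nonneg_left base1 (by positivity : (0:ℝ) ≤ sl * β)
    rw [hi1]; nlinarith [this]
  have F2 : ⟪w - zu, y - zu⟫_ℝ - su * α * (LF / 2) * ‖w - zu‖ ^ 2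
      ≤ su * α * (Ψ y - Ψ zu) := by
    have := mul_le_mul_of_nonneg_left base2 (by positivity : (0:ℝ) ≤ su * α)
    rw [hi2]; nlinarith [this]
  -- polarization identities
  have F3 : 2 * ⟪w - zl, y - zl⟫_ℝ = ‖w - zl‖ ^ 2 + ‖y - zl‖ ^ 2 - ‖y - w‖ ^ 2 := by
    have h := norm_sub_sq_real (w - zl) (y - zl)
    have e : (w - zl) - (y - zl) = w - y := by abel
    rw [e, norm_sub_rev w y] at h
    linarith
  have F4 : 2 * ⟪w - zu, y - zu⟫_ℝ = ‖w - zu‖ ^ 2 + ‖y - zu‖ ^ 2 - ‖y - w‖ ^ 2 := by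
    have h := norm_sub_sq_real (w - zu) (y - zu)
    have e : (w - zu) - (y - zu) = w - y := by abel
    rw [e, norm_sub_rev w y] at h
    linarith
  -- projection / convexity of squared norm
  have F5 : ‖y - wplus‖ ^ 2 + ‖p - wplus‖ ^ 2
      ≤ (1 - μ) * ‖y - zl‖ ^ 2 + μ * ‖y - zu‖ ^ 2 := by
    have hyp : y - p = (1 - μ) • (y - zl) + μ • (y - zu) := by rw [hp]; module
    have hstepB : ‖y - p‖ ^ 2 ≤ (1 - μ) * ‖y - zl‖ ^ 2 + μ * ‖y - zu‖ ^ 2 := by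
      rw [hyp, norm_add_sq_real]
      rw [norm_smul, norm_smul, real_inner_smul_left, real_inner_smul_right]
      have hab : 2 * ⟪y - zl, y - zu⟫_ℝ ≤ ‖y - zl‖ ^ 2 + ‖y - zu‖ ^ 2 := by
        nlinarith [real_inner_le_norm (y - zl) (y - zu),
          sq_nonneg (‖y - zl‖ - ‖y - zu‖)]
      rw [Real.norm_eq_abs, Real.norm_eq_abs, abs_of_pos (by linarith), abs_of_pos hμ0]
      have hmm : (0:ℝ) ≤ μ * (1 - μ) := by nlinarith
      nlinarith [mul_le_mul_of_nonneg_left hab hmm]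
    have hob : ⟪p - wplus, y - wplus⟫_ℝ ≤ 0 :=
      proj_obtuse hYconv hwplusY hwplus y hy
    have hexp : ‖y - p‖ ^ 2 = ‖y - wplus‖ ^ 2 - 2 * ⟪y - wplus, p - wplus⟫_ℝ
        + ‖p - wplus‖ ^ 2 := by
      have h := norm_sub_sq_real (y - wplus) (p - wplus)
      have e : (y - wplus) - (p - wplus) = y - p := by abel
      rw [e] at h
      linarith
    rw [real_inner_comm] at hexp
    linarith
  -- final assembly
  rw [ge_iff_le, ← sub_nonneg]
  have key : (0:ℝ) ≤ (1 / (2 * sl)) *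
      (2 * sl * ((1 - μ) * β * (ψ y - ψ zl)) + 2 * (μ * su * α * (Ψ y - Ψ zu))
        - μ * (1 - α * su * LF) * ‖w - zu‖ ^ 2
        - ‖y - wplus‖ ^ 2 - ‖p - wplus‖ ^ 2
        - (1 - μ) * (1 - β * sl * Lf) * ‖w - zl‖ ^ 2 + ‖y - w‖ ^ 2) := by
    apply mul_nonneg (by positivity)
    have G1 := mul_le_mul_of_nonneg_left F1 (by linarith : (0:ℝ) ≤ 2 * (1 - μ))
    have G2 := mul_le_mul_of_nonneg_left F2 (by linarith : (0:ℝ) ≤ 2 * μ)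
    have H3 : (1 - μ) * (2 * ⟪w - zl, y - zl⟫_ℝ)
        = (1 - μ) * (‖w - zl‖ ^ 2 + ‖y - zl‖ ^ 2 - ‖y - w‖ ^ 2) := by rw [F3]
    have H4 : μ * (2 * ⟪w - zu, y - zu⟫_ℝ)
        = μ * (‖w - zu‖ ^ 2 + ‖y - zu‖ ^ 2 - ‖y - w‖ ^ 2) := by rw [F4]
    nlinarith [G1, G2, H3, H4, F5]
  calc (0:ℝ) ≤ _ := key
    _ = _ := by field_simp; ring
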